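/- Let p ∈ [0,1] and k ∈ [n_b]. List the members of 𝒪^w_k in increasing Prim rank as v_{k,1},…,v_{k,O^w_k} where O^w_k = |𝒪^w_k|. Set 𝒦_{k,1} = 𝒦^b_k, and for 1 ≤ i ≤ O^w_k let 𝒩_i = N(v_{k,i}) ∩ 𝒦_{k,i} and 𝒦_{k,i+1} = 𝒦_{k,i} ∖ 𝒩_i. Set 𝒩_0 = N(σ(τ^b_k − 1)) ∩ 𝒦_{k,O^w_k+1} if σ(τ^b_k − 1) ∈ 𝒥^w_k ∩ N(σ(τ^b_k)), and 𝒩_0 = ∅ otherwise. Then the sets 𝒩_i, 0 ≤ i ≤ O^w_k, are pairwise disjoint and 𝒪^b_k = ∪_{0≤i≤O^w_k} 𝒩_i. -/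

import Mathlib

open MeasureTheory ProbabilityTheory Filter

namespace PrimBip

/-- Vertex set of the complete bipartite graph `K_{n_b,n_w}`:
black vertices are `Sum.inl`, white vertices are `Sum.inr`. -/
abbrev V (nb nw : ℕ) := Fin nb ⊕ Fin nw

def blacks (nb nw : ℕ) : Set (V nb nw) := Set.range Sum.inl

def whites (nb nw : ℕ) : Set (V nb nw) := Set.range Sum.inr

/-- Edge weights extended to pairs of vertices; non-edges get the junk value `2`. -/
def wt {nb nw : ℕ} (W : Fin nb → Fin nw → ℝ) : V nb nw → V nb nw → ℝ
  | Sum.inl b, Sum.inr w => W b w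
  | Sum.inr w, Sum.inl b => W b w
  | _, _ => 2

lemma wt_symm {nb nw : ℕ} (W : Fin nb → Fin nw → ℝ) (v v' : V nb nw) :
    wt W v v' = wt W v' v := by
  cases v <;> cases v' <;> rfl

/-- The a.s. properties of i.i.d. uniform edge weights: all weights lie in `(0,1)`
and are pairwise distinct. -/
def GoodWeights {nb nw : ℕ} (W : Fin nb → Fin nw → ℝ) : Prop :=
  (∀ b w, W b w ∈ Set.Ioo (0:ℝ) 1) ∧
    Function.Injective (fun bw : Fin nb × Fin nw => W bw.1 bw.2)

/-- `σ` (0-indexed: `σ 0` is the first vertex) is a Prim sequence for the weights `W`: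
it enumerates all the vertices, and at each step `k ≥ 1` the vertex `σ k` is an endpoint
of the minimal-weight edge joining `{σ 0, …, σ (k-1)}` to its complement. -/
def IsPrimSeq {nb nw : ℕ} (W : Fin nb → Fin nw → ℝ) (σ : ℕ → V nb nw) : Prop :=
  σ '' Set.Iio (nb + nw) = Set.univ ∧ Set.InjOn σ (Set.Iio (nb + nw)) ∧
    ∀ k, 0 < k → k < nb + nw →
      ∃ j < k, ∀ a b, a < k → k ≤ b → b < nb + nw →
        wt W (σ j) (σ k) ≤ wt W (σ a) (σ b)

/-- The Bernoulli bond percolation graph `G(n_b,n_w,p)`: keep exactly the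
(bipartite) edges of weight `≤ p`. -/
def percGraph {nb nw : ℕ} (W : Fin nb → Fin nw → ℝ) (p : ℝ) : SimpleGraph (V nb nw) where
  Adj v v' := v ≠ v' ∧ wt W v v' ≤ p
  symm := ⟨fun _ _ h => ⟨h.1.symm, by rw [wt_symm]; exact h.2⟩⟩
  loopless := ⟨fun _ h => h.1 rfl⟩

/-- 1-neighbourhood of a set of vertices. -/
def nbhd {α : Type*} (G : SimpleGraph α) (A : Set α) : Set α :=
  {v | v ∉ A ∧ ∃ a ∈ A, G.Adj a v}

/-- 2-neighbourhood of a set of vertices. -/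
def nbhd2 {α : Type*} (G : SimpleGraph α) (A : Set α) : Set α :=
  nbhd G (nbhd G A) \ A

/-- `Sig σ i` = `Σ(i)`, the set of the first `i` vertices in the Prim ranking. -/
def Sig {nb nw : ℕ} (σ : ℕ → V nb nw) (i : ℕ) : Set (V nb nw) := σ '' Set.Iio i

def SigB {nb nw : ℕ} (σ : ℕ → V nb nw) (i : ℕ) : Set (V nb nw) := Sig σ i ∩ blacks nb nw

def SigW {nb nw : ℕ} (σ : ℕ → V nb nw) (i : ℕ) : Set (V nb nw) := Sig σ i ∩ whites nb nw

/-- `tb σ k` = `τ^b_k`, the (1-based) Prim rank of the `k`-th black vertex. -/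
noncomputable def tb {nb nw : ℕ} (σ : ℕ → V nb nw) (k : ℕ) : ℕ :=
  sInf {i | (SigB σ i).ncard = k}

/-- The vertex of (1-based) Prim rank `i`. -/
def vat {nb nw : ℕ} (σ : ℕ → V nb nw) (i : ℕ) : V nb nw := σ (i - 1)

/-- `σ^b(k) = σ(τ^b_k)`, the `k`-th black vertex in Prim order. -/
noncomputable def sigb {nb nw : ℕ} (σ : ℕ → V nb nw) (k : ℕ) : V nb nw := vat σ (tb σ k)

/-- 0-based Prim rank of a vertex. -/
noncomputable def rk0 {nb nw : ℕ} (σ : ℕ → V nb nw) (v : V nb nw) : ℕ := sInf {i | σ i = v}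

/-- A lead vertex: the vertex of lowest Prim rank in its connected component of `G`. -/
def isLead {nb nw : ℕ} (G : SimpleGraph (V nb nw)) (σ : ℕ → V nb nw) (v : V nb nw) : Prop :=
  ∀ u, G.Reachable v u → rk0 σ v ≤ rk0 σ u

/-- A root vertex: a black vertex of lowest Prim rank among the black vertices of
its connected component of `G`. -/
def isRoot {nb nw : ℕ} (G : SimpleGraph (V nb nw)) (σ : ℕ → V nb nw) (v : V nb nw) : Prop :=
  v ∈ blacks nb nw ∧ ∀ u ∈ blacks nb nw, G.Reachable v u → rk0 σ v ≤ rk0 σ u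

/-- `𝒥^w_k`: the white lead vertices among `Σ^w(τ^b_k)`. -/
def Jw {nb nw : ℕ} (G : SimpleGraph (V nb nw)) (σ : ℕ → V nb nw) (k : ℕ) : Set (V nb nw) :=
  {v | v ∈ SigW σ (tb σ k) ∧ isLead G σ v}

/-- `ℐ^b_k`: the root vertices among `Σ^b(τ^b_k)`. -/
def Ib {nb nw : ℕ} (G : SimpleGraph (V nb nw)) (σ : ℕ → V nb nw) (k : ℕ) : Set (V nb nw) :=
  {v | v ∈ SigB σ (tb σ k) ∧ isRoot G σ v}

noncomputable def Jwc {nb nw : ℕ} (G : SimpleGraph (V nb nw)) (σ : ℕ → V nb nw) (k : ℕ) : ℕ :=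
  (Jw G σ k).ncard

noncomputable def Ibc {nb nw : ℕ} (G : SimpleGraph (V nb nw)) (σ : ℕ → V nb nw) (k : ℕ) : ℕ :=
  (Ib G σ k).ncard

/-- `𝒦^w_k`: the pool of white vertices available for discovery at step `k`. -/
noncomputable def Kw {nb nw : ℕ} (G : SimpleGraph (V nb nw)) (σ : ℕ → V nb nw) :
    ℕ → Set (V nb nw)
  | 0 => ∅
  | 1 => whites nb nw \ SigW σ (tb σ 1)
  | (k+2) => Kw G σ (k+1) \ ((nbhd G {sigb σ (k+1)} ∩ Kw G σ (k+1)) ∪ SigW σ (tb σ (k+2)))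

/-- `𝒪^w_k = N(σ^b(k)) ∩ 𝒦^w_k`. -/
noncomputable def Ow {nb nw : ℕ} (G : SimpleGraph (V nb nw)) (σ : ℕ → V nb nw) (k : ℕ) :
    Set (V nb nw) :=
  nbhd G {sigb σ k} ∩ Kw G σ k

/-- Auxiliary recursion: `(ObAux k).1 = ∪_{j ∈ [k]} 𝒪^b_j` and `(ObAux k).2 = 𝒪^b_k`. -/
noncomputable def ObAux {nb nw : ℕ} (G : SimpleGraph (V nb nw)) (σ : ℕ → V nb nw) :
    ℕ → Set (V nb nw) × Set (V nb nw)
  | 0 => (∅, ∅)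
  | (k+1) =>
    let c := (ObAux G σ k).1
    let o := nbhd2 G {sigb σ (k+1)} ∩ (blacks nb nw \ (c ∪ SigB σ (tb σ (k+1))))
    (c ∪ o, o)

/-- `𝒪^b_k`, the 2-neighbourhood discovered at step `k`. -/
noncomputable def Ob {nb nw : ℕ} (G : SimpleGraph (V nb nw)) (σ : ℕ → V nb nw) (k : ℕ) :
    Set (V nb nw) :=
  (ObAux G σ k).2

/-- `𝒦^b_k = V^b ∖ (∪_{j ≤ k-1} 𝒪^b_j ∪ Σ^b(τ^b_k))`. -/
noncomputable def Kb {nb nw : ℕ} (G : SimpleGraph (V nb nw)) (σ : ℕ → V nb nw) (k : ℕ) :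
    Set (V nb nw) :=
  blacks nb nw \ ((ObAux G σ (k-1)).1 ∪ SigB σ (tb σ k))

noncomputable def Owc {nb nw : ℕ} (G : SimpleGraph (V nb nw)) (σ : ℕ → V nb nw) (k : ℕ) : ℕ :=
  (Ow G σ k).ncard

noncomputable def Obc {nb nw : ℕ} (G : SimpleGraph (V nb nw)) (σ : ℕ → V nb nw) (k : ℕ) : ℕ :=
  (Ob G σ k).ncard

noncomputable def Kwc {nb nw : ℕ} (G : SimpleGraph (V nb nw)) (σ : ℕ → V nb nw) (k : ℕ) : ℕ :=
  (Kw G σ k).ncard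

noncomputable def Kbc {nb nw : ℕ} (G : SimpleGraph (V nb nw)) (σ : ℕ → V nb nw) (k : ℕ) : ℕ :=
  (Kb G σ k).ncard

/-- `S^w_k = Σ_{j ∈ [k]} O^w_j`. -/
noncomputable def Swk {nb nw : ℕ} (G : SimpleGraph (V nb nw)) (σ : ℕ → V nb nw) (k : ℕ) : ℕ :=
  ∑ j ∈ Finset.range k, Owc G σ (j+1)

/-- `S^b_k = Σ_{j ∈ [k]} O^b_j`. -/
noncomputable def Sbk {nb nw : ℕ} (G : SimpleGraph (V nb nw)) (σ : ℕ → V nb nw) (k : ℕ) : ℕ :=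
  ∑ j ∈ Finset.range k, Obc G σ (j+1)

/-- `R(k) = |Σ^w(τ^b_k)| − J^w(k)`. -/
noncomputable def Rfn {nb nw : ℕ} (G : SimpleGraph (V nb nw)) (σ : ℕ → V nb nw) (k : ℕ) : ℤ :=
  ((SigW σ (tb σ k)).ncard : ℤ) - Jwc G σ k

/-- `Δ_k = Σ_{1 ≤ i ≤ O^w_k} |𝒩_i| = |N(𝒪^w_k) ∩ 𝒦^b_k|`. -/
noncomputable def Delta {nb nw : ℕ} (G : SimpleGraph (V nb nw)) (σ : ℕ → V nb nw) (k : ℕ) : ℕ :=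
  (nbhd G (Ow G σ k) ∩ Kb G σ k).ncard

/-- `𝒜^w_k = {σ(i) : i > τ^b_k, σ(i) ∈ ∪_{j ∈ [k−1]} 𝒪^w_j}`. -/
noncomputable def Aw {nb nw : ℕ} (G : SimpleGraph (V nb nw)) (σ : ℕ → V nb nw) (k : ℕ) :
    Set (V nb nw) :=
  (⋃ j ∈ Finset.range (k-1), Ow G σ (j+1)) \ Sig σ (tb σ k)

/-- `𝒜^b_k = (∪_{j ∈ [k]} 𝒪^b_j) ∖ Σ^b(τ^b_k)`. -/
noncomputable def Ab {nb nw : ℕ} (G : SimpleGraph (V nb nw)) (σ : ℕ → V nb nw) (k : ℕ) :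
    Set (V nb nw) :=
  (⋃ j ∈ Finset.range k, Ob G σ (j+1)) \ SigB σ (tb σ k)

/-- The interval `⟦i,j⟧_π` of vertices of π-rank between `i` and `j`. -/
def geoInterval {α : Type*} {m : ℕ} (π : Fin m ≃ α) (i j : Fin m) : Set α :=
  {v | i ≤ π.symm v ∧ π.symm v ≤ j}

/-- `π` is a graph exploration order (GEO) for `G`. -/
def IsGEO {α : Type*} {m : ℕ} (G : SimpleGraph α) (π : Fin m ≃ α) : Prop :=
  ∀ i j : Fin m, i ≤ j → G.Reachable (π i) (π j) →
    ∃ i', i' ≤ i ∧ (G.induce (geoInterval π i' j)).Connected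

/-- A `π`-good path from `u` to `v`: a path along which the π-ranks strictly increase. -/
def IsGoodPath {α : Type*} {m : ℕ} (G : SimpleGraph α) (π : Fin m ≃ α) (u v : α) : Prop :=
  ∃ (k : ℕ) (w : ℕ → α), w 0 = u ∧ w k = v ∧ (∀ i < k, G.Adj (w i) (w (i+1))) ∧
    StrictMonoOn (fun i => π.symm (w i)) (Set.Iic k)

/-- GEO for a 0-indexed enumeration `σ` of the `n` vertices. -/
def IsGEOSeq {α : Type*} (G : SimpleGraph α) (n : ℕ) (σ : ℕ → α) : Prop :=
  ∀ i j, i ≤ j → j < n → G.Reachable (σ i) (σ j) →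
    ∃ i' ≤ i, (G.induce (σ '' Set.Icc i' j)).Connected

/-- `pew W σ i` = `U_{e_i}`, the weight of the `i`-th Prim edge: the minimal weight
over the cut between the first `i` vertices and the rest. -/
noncomputable def pew {nb nw : ℕ} (W : Fin nb → Fin nw → ℝ) (σ : ℕ → V nb nw) (i : ℕ) : ℝ :=
  sInf {x | ∃ a b, a < i ∧ i ≤ b ∧ b < nb + nw ∧ x = wt W (σ a) (σ b)}

/-- The sequence `J_j` of Prim ranks at which new components start. -/
noncomputable def Jseq {nb nw : ℕ} (W : Fin nb → Fin nw → ℝ) (σ : ℕ → V nb nw) (p : ℝ) :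
    ℕ → ℕ
  | 0 => 0
  | (j+1) => sInf ({i | Jseq W σ p j < i ∧ i < nb + nw ∧ p < pew W σ i} ∪ {nb + nw})

/-- `m = inf{j ≥ 1 : J_j = n}`, the number of connected components. -/
noncomputable def mComp {nb nw : ℕ} (W : Fin nb → Fin nw → ℝ) (σ : ℕ → V nb nw) (p : ℝ) : ℕ :=
  sInf {j | 1 ≤ j ∧ Jseq W σ p j = nb + nw}

/-- The binomial probability mass function. -/
noncomputable def binomPMF (m : ℕ) (p : ℝ) (j : ℕ) : ℝ :=
  (m.choose j : ℝ) * p ^ j * (1 - p) ^ (m - j)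

/-- The pmf of the distribution `𝒟(m, k, p)`: the law of `X_1 + ⋯ + X_k` where
`X_1 ~ Bin(m,p)` and, given `X_1,…,X_i`, `X_{i+1} ~ Bin(m − Σ_{j≤i} X_j, p)`. -/
noncomputable def Dpmf : ℕ → ℕ → ℝ → ℕ → ℝ
  | _, 0, _, j => if j = 0 then 1 else 0
  | m, (k+1), p, j => ∑ i ∈ Finset.range (j+1), binomPMF m p i * Dpmf (m - i) k p (j - i)

end PrimBip

namespace PrimBip

variable {nb nw : ℕ}

lemma black_or_white (v : V nb nw) : v ∈ blacks nb nw ∨ v ∈ whites nb nw := by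
  cases v with
  | inl b => exact Or.inl ⟨b, rfl⟩
  | inr w => exact Or.inr ⟨w, rfl⟩

lemma not_black_and_white {v : V nb nw} (hb : v ∈ blacks nb nw) (hw : v ∈ whites nb nw) :
    False := by
  obtain ⟨b, rfl⟩ := hb; obtain ⟨w, hw⟩ := hw; cases hw

lemma percGraph_adj {W : Fin nb → Fin nw → ℝ} {p : ℝ} {x y : V nb nw} :
    (percGraph W p).Adj x y ↔ x ≠ y ∧ wt W x y ≤ p := Iff.rfl

lemma adj_black_white {W : Fin nb → Fin nw → ℝ} {p : ℝ} (hp1 : p ≤ 1) {x y : V nb nw}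
    (h : (percGraph W p).Adj x y) (hx : x ∈ blacks nb nw) : y ∈ whites nb nw := by
  obtain ⟨b, rfl⟩ := hx
  cases y with
  | inl b' => exact absurd h.2 (by simp [wt]; linarith)
  | inr w => exact ⟨w, rfl⟩

lemma adj_white_black {W : Fin nb → Fin nw → ℝ} {p : ℝ} (hp1 : p ≤ 1) {x y : V nb nw}
    (h : (percGraph W p).Adj x y) (hx : x ∈ whites nb nw) : y ∈ blacks nb nw := by
  obtain ⟨w, rfl⟩ := hx
  cases y with
  | inl b => exact ⟨b, rfl⟩
  | inr w' => exact absurd h.2 (by simp [wt]; linarith)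

lemma mem_nbhd_singleton {G : SimpleGraph (V nb nw)} {s x : V nb nw} :
    x ∈ nbhd G {s} ↔ x ≠ s ∧ G.Adj s x := by
  simp [nbhd]

lemma nbhd_singleton_black {W : Fin nb → Fin nw → ℝ} {p : ℝ} (hp1 : p ≤ 1) {s : V nb nw}
    (hs : s ∈ blacks nb nw) : nbhd (percGraph W p) {s} ⊆ whites nb nw := by
  intro x hx
  exact adj_black_white hp1 (mem_nbhd_singleton.1 hx).2 hs

section Rank

variable {W : Fin nb → Fin nw → ℝ} {σ : ℕ → V nb nw} (hσ : IsPrimSeq W σ)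
include hσ

lemma exists_rank (v : V nb nw) : ∃ i < nb + nw, σ i = v := by
  have h := hσ.1
  have : v ∈ σ '' Set.Iio (nb + nw) := h ▸ Set.mem_univ v
  obtain ⟨i, hi, hiv⟩ := this
  exact ⟨i, hi, hiv⟩

lemma sigma_rk0 (v : V nb nw) : σ (rk0 σ v) = v := by
  obtain ⟨i, _, hiv⟩ := exists_rank hσ v
  exact Nat.sInf_mem (⟨i, hiv⟩ : {i | σ i = v}.Nonempty)

lemma rk0_lt (v : V nb nw) : rk0 σ v < nb + nw := by
  obtain ⟨i, hi, hiv⟩ := exists_rank hσ v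
  exact lt_of_le_of_lt (Nat.sInf_le hiv) hi

lemma rk0_sigma {j : ℕ} (hj : j < nb + nw) : rk0 σ (σ j) = j := by
  have h1 : rk0 σ (σ j) ≤ j := Nat.sInf_le rfl
  have h2 := sigma_rk0 hσ (σ j)
  exact hσ.2.1 (lt_of_le_of_lt h1 hj) hj h2

lemma mem_Sig_iff {v : V nb nw} {i : ℕ} : v ∈ Sig σ i ↔ rk0 σ v < i := by
  constructor
  · rintro ⟨j, hj, rfl⟩
    exact lt_of_le_of_lt (Nat.sInf_le rfl) hj
  · intro h
    exact ⟨rk0 σ v, h, sigma_rk0 hσ v⟩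

end Rank

end PrimBip
namespace PrimBip

variable {nb nw : ℕ}

lemma Sig_succ (σ : ℕ → V nb nw) (i : ℕ) : Sig σ (i+1) = insert (σ i) (Sig σ i) := by
  ext v
  simp only [Sig, Set.mem_image, Set.mem_Iio, Nat.lt_succ_iff_lt_or_eq, Set.mem_insert_iff]
  constructor
  · rintro ⟨j, hj | rfl, rfl⟩
    · exact Or.inr ⟨j, hj, rfl⟩
    · exact Or.inl rfl
  · rintro (rfl | ⟨j, hj, rfl⟩)
    · exact ⟨i, Or.inr rfl, rfl⟩
    · exact ⟨j, Or.inl hj, rfl⟩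

lemma Sig_mono (σ : ℕ → V nb nw) {i j : ℕ} (h : i ≤ j) : Sig σ i ⊆ Sig σ j :=
  Set.image_mono (Set.Iio_subset_Iio h)

lemma SigB_eq (σ : ℕ → V nb nw) (i : ℕ) : SigB σ i = Sig σ i ∩ blacks nb nw := rfl

lemma SigB_mono (σ : ℕ → V nb nw) {i j : ℕ} (h : i ≤ j) : SigB σ i ⊆ SigB σ j :=
  Set.inter_subset_inter_left _ (Sig_mono σ h)

lemma ncard_SigB_mono (σ : ℕ → V nb nw) {i j : ℕ} (h : i ≤ j) :
    (SigB σ i).ncard ≤ (SigB σ j).ncard :=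
  Set.ncard_le_ncard (SigB_mono σ h) (Set.toFinite _)

lemma ncard_SigB_succ_le (σ : ℕ → V nb nw) (i : ℕ) :
    (SigB σ (i+1)).ncard ≤ (SigB σ i).ncard + 1 := by
  have h : SigB σ (i+1) ⊆ insert (σ i) (SigB σ i) := by
    rw [SigB_eq, Sig_succ]
    intro v hv
    rcases hv.1 with rfl | hv'
    · exact Set.mem_insert _ _
    · exact Set.mem_insert_of_mem _ ⟨hv', hv.2⟩
  exact le_trans (Set.ncard_le_ncard h (Set.toFinite _)) (Set.ncard_insert_le _ _)

lemma nat_ivt (f : ℕ → ℕ) (hf : ∀ i, f (i+1) ≤ f i + 1) :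
    ∀ N k, f 0 ≤ k → k ≤ f N → ∃ i ≤ N, f i = k := by
  intro N
  induction N with
  | zero => exact fun k h1 h2 => ⟨0, le_refl _, le_antisymm h1 h2⟩
  | succ N ih =>
    intro k h1 h2
    by_cases hk : k ≤ f N
    · obtain ⟨i, hi, hfi⟩ := ih k h1 hk
      exact ⟨i, le_trans hi (Nat.le_succ _), hfi⟩
    · push_neg at hk
      have : f (N+1) ≤ k := le_trans (hf N) hk
      exact ⟨N+1, le_refl _, le_antisymm this h2⟩

lemma SigB_zero (σ : ℕ → V nb nw) : SigB σ 0 = ∅ := by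
  simp [SigB_eq, Sig, Set.eq_empty_iff_forall_notMem]

section Rank

variable {W : Fin nb → Fin nw → ℝ} {σ : ℕ → V nb nw} (hσ : IsPrimSeq W σ)
include hσ

lemma SigB_total : SigB σ (nb + nw) = blacks nb nw := by
  rw [SigB_eq]
  have : Sig σ (nb+nw) = Set.univ := hσ.1
  rw [this, Set.univ_inter]

omit hσ in
lemma ncard_blacks : (blacks nb nw).ncard = nb := by
  have h1 : (blacks nb nw).ncard = Nat.card (Set.range (Sum.inl : Fin nb → V nb nw)) :=
    (Nat.card_coe_set_eq _).symm
  rw [h1, Nat.card_range_of_injective Sum.inl_injective, Nat.card_eq_fintype_card,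
    Fintype.card_fin]

lemma exists_tb_witness {k : ℕ} (hk : k ≤ nb) : ∃ i ≤ nb + nw, (SigB σ i).ncard = k := by
  have h0 : (SigB σ 0).ncard = 0 := by rw [SigB_zero]; exact Set.ncard_empty _
  have hN : (SigB σ (nb+nw)).ncard = nb := by rw [SigB_total hσ]; exact ncard_blacks
  exact nat_ivt (fun i => (SigB σ i).ncard) (ncard_SigB_succ_le σ) (nb+nw) k
    (by simpa [h0]) (by simpa [hN])

lemma tb_card {k : ℕ} (hk : k ≤ nb) : (SigB σ (tb σ k)).ncard = k := by
  obtain ⟨i, _, hi⟩ := exists_tb_witness hσ hk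
  exact Nat.sInf_mem (⟨i, hi⟩ : {i | (SigB σ i).ncard = k}.Nonempty)

lemma tb_le {k : ℕ} (hk : k ≤ nb) : tb σ k ≤ nb + nw := by
  obtain ⟨i, hin, hi⟩ := exists_tb_witness hσ hk
  exact le_trans (Nat.sInf_le hi) hin

lemma tb_not_lt {k i : ℕ} (hi : i < tb σ k) : (SigB σ i).ncard ≠ k := by
  have h := Nat.notMem_of_lt_sInf (s := {i | (SigB σ i).ncard = k}) hi
  simpa using h

lemma tb_pos {k : ℕ} (hk1 : 1 ≤ k) (hk : k ≤ nb) : 1 ≤ tb σ k := by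
  by_contra h
  push_neg at h
  have h0 : tb σ k = 0 := by omega
  have := tb_card hσ hk
  rw [h0, SigB_zero, Set.ncard_empty] at this
  omega

lemma tb_mono {j k : ℕ} (hjk : j ≤ k) (hk : k ≤ nb) : tb σ j ≤ tb σ k := by
  have hjnb : j ≤ nb := le_trans hjk hk
  have h0 : (SigB σ 0).ncard = 0 := by rw [SigB_zero]; exact Set.ncard_empty _
  have hN := tb_card hσ hk
  have := nat_ivt (fun i => (SigB σ i).ncard) (ncard_SigB_succ_le σ) (tb σ k) j
    (by simpa [h0]) (by simpa [hN])
  obtain ⟨i, hi, hfi⟩ := this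
  exact le_trans (Nat.sInf_le hfi) hi

end Rank

end PrimBip
namespace PrimBip

variable {nb nw : ℕ}

section Rank

variable {W : Fin nb → Fin nw → ℝ} {σ : ℕ → V nb nw} (hσ : IsPrimSeq W σ)
include hσ

lemma sigb_black {k : ℕ} (hk1 : 1 ≤ k) (hk : k ≤ nb) : sigb σ k ∈ blacks nb nw := by
  rcases black_or_white (sigb σ k) with hb | hw
  · exact hb
  · exfalso
    have ht1 := tb_pos hσ hk1 hk
    have hsucc : tb σ k = (tb σ k - 1) + 1 := by omega
    have heq : SigB σ (tb σ k) = SigB σ (tb σ k - 1) := by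
      conv_lhs => rw [hsucc]
      rw [SigB_eq, Sig_succ, SigB_eq]
      ext x
      simp only [Set.mem_inter_iff, Set.mem_insert_iff]
      constructor
      · rintro ⟨rfl | hx, hb⟩
        · exact absurd hb (fun hb => not_black_and_white hb hw)
        · exact ⟨hx, hb⟩
      · rintro ⟨hx, hb⟩; exact ⟨Or.inr hx, hb⟩
    have := tb_not_lt hσ (k := k) (i := tb σ k - 1) (by omega)
    rw [← heq, tb_card hσ hk] at this
    exact this rfl

lemma sigb_mem_Sig {j k : ℕ} (hj1 : 1 ≤ j) (hjk : j ≤ k) (hk : k ≤ nb) :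
    sigb σ j ∈ Sig σ (tb σ k) := by
  have h1 := tb_pos hσ hj1 (le_trans hjk hk)
  have h2 := tb_mono hσ hjk hk
  exact ⟨tb σ j - 1, Set.mem_Iio.2 (by omega), rfl⟩

lemma rk0_sigb {k : ℕ} (hk1 : 1 ≤ k) (hk : k ≤ nb) : rk0 σ (sigb σ k) = tb σ k - 1 := by
  have := tb_le hσ hk
  have := tb_pos hσ hk1 hk
  exact rk0_sigma hσ (by omega)

/-- Every black vertex of rank at most `τ^b_k - 2` is `σ^b(j)` for some `1 ≤ j ≤ k-1`. -/
lemma blackIndex {k : ℕ} (hk1 : 1 ≤ k) (hk : k ≤ nb) {x : V nb nw} (hx : x ∈ blacks nb nw)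
    (hrk : rk0 σ x + 1 ≤ tb σ k - 1) :
    ∃ j, 1 ≤ j ∧ j ≤ k - 1 ∧ tb σ j = rk0 σ x + 1 ∧ sigb σ j = x := by
  have hxlt : rk0 σ x < nb + nw := rk0_lt hσ x
  have hσx : σ (rk0 σ x) = x := sigma_rk0 hσ x
  have htkpos := tb_pos hσ hk1 hk
  set rx := rk0 σ x with hrx
  have hstep : SigB σ (rx+1) = insert x (SigB σ rx) := by
    rw [SigB_eq, Sig_succ, hσx, SigB_eq]
    ext y
    simp only [Set.mem_inter_iff, Set.mem_insert_iff]
    constructor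
    · rintro ⟨rfl | hy, hb⟩
      · exact Or.inl rfl
      · exact Or.inr ⟨hy, hb⟩
    · rintro (rfl | ⟨hy, hb⟩)
      · exact ⟨Or.inl rfl, hx⟩
      · exact ⟨Or.inr hy, hb⟩
  have hxnot : x ∉ SigB σ rx := fun h => absurd ((mem_Sig_iff hσ).1 h.1) (by omega)
  have hcard : (SigB σ (rx+1)).ncard = (SigB σ rx).ncard + 1 := by
    rw [hstep]; exact Set.ncard_insert_of_notMem hxnot (Set.toFinite _)
  set j := (SigB σ (rx+1)).ncard with hj
  have hj1 : 1 ≤ j := by omega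
  have hmono : j ≤ (SigB σ (tb σ k - 1)).ncard := ncard_SigB_mono σ hrk
  have hne : (SigB σ (tb σ k - 1)).ncard ≠ k := tb_not_lt hσ (by omega)
  have hle : (SigB σ (tb σ k - 1)).ncard ≤ k := by
    have h := ncard_SigB_mono σ (show tb σ k - 1 ≤ tb σ k by omega)
    rwa [tb_card hσ hk] at h
  have hjk : j ≤ k - 1 := by omega
  have htbj_le : tb σ j ≤ rx + 1 := Nat.sInf_le hj.symm
  have htbj_mem : (SigB σ (tb σ j)).ncard = j := tb_card hσ (by omega)
  have htbj : tb σ j = rx + 1 := by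
    by_contra hne2
    have h2 : tb σ j ≤ rx := by omega
    have h3 := ncard_SigB_mono σ h2
    rw [htbj_mem] at h3
    omega
  refine ⟨j, hj1, hjk, htbj, ?_⟩
  show vat σ (tb σ j) = x
  rw [htbj]
  show σ (rx + 1 - 1) = x
  simpa using hσx

end Rank

end PrimBip
namespace PrimBip

variable {nb nw : ℕ} {G : SimpleGraph (V nb nw)} {σ : ℕ → V nb nw}

lemma ObAux_fst_succ (G : SimpleGraph (V nb nw)) (σ : ℕ → V nb nw) (k : ℕ) :
    (ObAux G σ (k+1)).1 = (ObAux G σ k).1 ∪ Ob G σ (k+1) := rfl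

lemma ObAux_fst_mono (G : SimpleGraph (V nb nw)) (σ : ℕ → V nb nw) {j k : ℕ} (h : j ≤ k) :
    (ObAux G σ j).1 ⊆ (ObAux G σ k).1 := by
  induction k with
  | zero => simp_all
  | succ k ih =>
    rcases Nat.lt_or_ge j (k+1) with h' | h'
    · exact subset_trans (ih (by omega)) (by rw [ObAux_fst_succ]; exact Set.subset_union_left)
    · have : j = k + 1 := by omega
      subst this; rfl

lemma Ob_subset_fst (G : SimpleGraph (V nb nw)) (σ : ℕ → V nb nw) {j l : ℕ}
    (hj : 1 ≤ j) (hl : j ≤ l) : Ob G σ j ⊆ (ObAux G σ l).1 := by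
  obtain ⟨j', rfl⟩ : ∃ j', j = j' + 1 := ⟨j - 1, by omega⟩
  refine subset_trans ?_ (ObAux_fst_mono G σ hl)
  rw [ObAux_fst_succ]
  exact Set.subset_union_right

lemma Ob_eq {k : ℕ} (hk : 1 ≤ k) :
    Ob G σ k = nbhd2 G {sigb σ k} ∩ Kb G σ k := by
  obtain ⟨k', rfl⟩ : ∃ k', k = k' + 1 := ⟨k - 1, by omega⟩
  simp [Ob, ObAux, Kb]

lemma Ow_eq (k : ℕ) : Ow G σ k = nbhd G {sigb σ k} ∩ Kw G σ k := rfl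

lemma SigW_subset_mono {W : Fin nb → Fin nw → ℝ} (hσ : IsPrimSeq W σ) {j k : ℕ}
    (hjk : j ≤ k) (hk : k ≤ nb) : SigW σ (tb σ j) ⊆ SigW σ (tb σ k) :=
  Set.inter_subset_inter_left _ (Sig_mono σ (tb_mono hσ hjk hk))

lemma Kw_eq {W : Fin nb → Fin nw → ℝ} (hσ : IsPrimSeq W σ) :
    ∀ k, 1 ≤ k → k ≤ nb →
      Kw G σ k = whites nb nw \ (SigW σ (tb σ k) ∪ ⋃ j ∈ Finset.range (k-1), Ow G σ (j+1))
  | 0, h, _ => absurd h (by omega)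
  | 1, _, _ => by simp [Kw]
  | (k+2), _, hk => by
    have ih := Kw_eq hσ (k+1) (by omega) (by omega)
    have hstep : Kw G σ (k+2) =
        Kw G σ (k+1) \ (Ow G σ (k+1) ∪ SigW σ (tb σ (k+2))) := rfl
    rw [hstep, ih]
    have hS : SigW σ (tb σ (k+1)) ⊆ SigW σ (tb σ (k+2)) :=
      SigW_subset_mono hσ (by omega) hk
    have hU : (⋃ j ∈ Finset.range (k+2-1), Ow G σ (j+1)) =
        (⋃ j ∈ Finset.range k, Ow G σ (j+1)) ∪ Ow G σ (k+1) := by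
      have : k + 2 - 1 = k + 1 := by omega
      rw [this, Finset.range_add_one]
      rw [Finset.set_biUnion_insert]
      exact Set.union_comm _ _
    rw [hU]
    have hU2 : (⋃ j ∈ Finset.range (k+1-1), Ow G σ (j+1)) =
        (⋃ j ∈ Finset.range k, Ow G σ (j+1)) := by norm_num
    rw [hU2]
    ext x
    have hSx := @hS x
    simp only [Set.mem_diff, Set.mem_union]
    tauto

lemma Kw_sub_whites {W : Fin nb → Fin nw → ℝ} (hσ : IsPrimSeq W σ) {k : ℕ}
    (hk1 : 1 ≤ k) (hk : k ≤ nb) : Kw G σ k ⊆ whites nb nw := by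
  rw [Kw_eq hσ k hk1 hk]; exact Set.diff_subset

lemma Ow_sub_Kw (k : ℕ) : Ow G σ k ⊆ Kw G σ k := Set.inter_subset_right

lemma Kb_spec {k : ℕ} {u : V nb nw} (hu : u ∈ Kb G σ k) :
    u ∈ blacks nb nw ∧ u ∉ (ObAux G σ (k-1)).1 ∧ u ∉ SigB σ (tb σ k) := by
  refine ⟨hu.1, fun h => hu.2 (Or.inl h), fun h => hu.2 (Or.inr h)⟩

lemma Kb_not_Sig {k : ℕ} {u : V nb nw} (hu : u ∈ Kb G σ k) : u ∉ Sig σ (tb σ k) :=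
  fun h => (Kb_spec hu).2.2 ⟨h, hu.1⟩

end PrimBip
namespace PrimBip

variable {nb nw : ℕ} {σ : ℕ → V nb nw} {W : Fin nb → Fin nw → ℝ} {p : ℝ}

/-- If `w` is a white vertex adjacent to a previously processed black `σ^b(j)` (`j ≤ k-1`),
then any undiscovered black neighbour `u` of `w` outside `Σ(τ^b_k)` yields a contradiction. -/
lemma ObHit (hσ : IsPrimSeq W σ) (hp1 : p ≤ 1)
    {k j : ℕ} (hk : k ≤ nb) (hj1 : 1 ≤ j) (hj : j ≤ k - 1)
    {w u : V nb nw}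
    (hwn : w ∈ nbhd (percGraph W p) {sigb σ j})
    (hadj : (percGraph W p).Adj w u)
    (hub : u ∈ blacks nb nw)
    (hus : u ∉ Sig σ (tb σ k))
    (huo : u ∉ (ObAux (percGraph W p) σ (k-1)).1) : False := by
  have hk2 : 2 ≤ k := by omega
  have hsb : sigb σ j ∈ blacks nb nw := sigb_black hσ (by omega) (by omega)
  have hOb : u ∈ Ob (percGraph W p) σ j := by
    rw [Ob_eq (by omega)]
    refine ⟨⟨⟨?_, ⟨w, hwn, hadj⟩⟩, ?_⟩, hub, ?_⟩
    · intro hmem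
      exact not_black_and_white hub (nbhd_singleton_black hp1 hsb hmem)
    · intro hmem
      rw [Set.mem_singleton_iff] at hmem
      exact hus (hmem ▸ sigb_mem_Sig hσ (by omega) (by omega) hk)
    · rintro (h | h)
      · exact huo (ObAux_fst_mono _ _ (by omega) h)
      · exact hus (Sig_mono σ (tb_mono hσ (by omega) hk) h.1)
  exact huo (Ob_subset_fst _ _ hj1 hj hOb)

/-- A white vertex adjacent to some processed black `σ^b(j)` with `τ^b_j ≤ rk(w)` has been
discovered: it lies in `⋃_{j ≤ k-1} 𝒪^w_j`. -/
lemma discovered (hσ : IsPrimSeq W σ) (hp1 : p ≤ 1) {k : ℕ} (hk : k ≤ nb)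
    {w : V nb nw} (hw : w ∈ whites nb nw)
    (hex : ∃ j, 1 ≤ j ∧ j ≤ k - 1 ∧ tb σ j ≤ rk0 σ w ∧ (percGraph W p).Adj (sigb σ j) w) :
    w ∈ ⋃ j ∈ Finset.range (k-1), Ow (percGraph W p) σ (j+1) := by
  set T := {j | 1 ≤ j ∧ j ≤ k - 1 ∧ tb σ j ≤ rk0 σ w ∧ (percGraph W p).Adj (sigb σ j) w}
    with hT
  have hmem := Nat.sInf_mem (⟨_, hex.choose_spec⟩ : T.Nonempty)
  set j0 := sInf T with hj0
  obtain ⟨hj1, hjk, htb, hadj⟩ := hmem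
  have hOw : w ∈ Ow (percGraph W p) σ j0 := by
    refine ⟨mem_nbhd_singleton.2
      ⟨fun h => not_black_and_white (h ▸ sigb_black hσ (by omega) (by omega)) hw, hadj⟩, ?_⟩
    rw [Kw_eq hσ j0 hj1 (by omega)]
    refine ⟨hw, ?_⟩
    rintro (h | h)
    · exact absurd ((mem_Sig_iff hσ).1 h.1) (by omega)
    · simp only [Set.mem_iUnion, Finset.mem_range, exists_prop] at h
      obtain ⟨i, hi, hOwi⟩ := h
      have hi' : i + 1 < j0 := by omega
      have hadj' : (percGraph W p).Adj (sigb σ (i+1)) w := (mem_nbhd_singleton.1 hOwi.1).2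
      have hKw : w ∈ Kw (percGraph W p) σ (i+1) := hOwi.2
      rw [Kw_eq hσ (i+1) (by omega) (by omega)] at hKw
      have htb' : tb σ (i+1) ≤ rk0 σ w := by
        by_contra hlt
        push_neg at hlt
        exact hKw.2 (Or.inl ⟨(mem_Sig_iff hσ).2 hlt, hw⟩)
      have hiT : (i+1) ∈ T := ⟨by omega, by omega, htb', hadj'⟩
      exact absurd (Nat.sInf_le hiT) (by omega)
  simp only [Set.mem_iUnion, Finset.mem_range, exists_prop]
  refine ⟨j0 - 1, by omega, ?_⟩
  have h : j0 - 1 + 1 = j0 := by omega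
  rw [h]
  exact hOw

end PrimBip
namespace PrimBip

variable {nb nw : ℕ} {σ : ℕ → V nb nw} {W : Fin nb → Fin nw → ℝ} {p : ℝ}

lemma walk_avoid {α : Type*} {G : SimpleGraph α} {S : Set α}
    (hS : ∀ x y, G.Adj x y → x ∉ S → y ∉ S) :
    ∀ {a b : α}, G.Walk a b → a ∉ S → b ∉ S := by
  intro a b wk
  induction wk with
  | nil => exact id
  | cons h q ih => exact fun ha => ih (hS _ _ h ha)

/-- **Crux lemma.** If `w ∈ Σ^w(τ^b_k)` is adjacent (in `G`) to an undiscovered black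
vertex `u ∉ Σ(τ^b_k)`, and `w` was never discovered in previous rounds, then `w` is the
vertex of Prim rank `τ^b_k - 1` (0-based `τ^b_k - 2`), it is adjacent to `σ^b(k)`,
and it is a lead vertex. -/
lemma keyLemma (hσ : IsPrimSeq W σ) (hp1 : p ≤ 1)
    {k : ℕ} (hk1 : 1 ≤ k) (hk : k ≤ nb)
    {w u : V nb nw}
    (hw : w ∈ whites nb nw) (hwS : w ∈ Sig σ (tb σ k))
    (hadj : (percGraph W p).Adj w u)
    (hub : u ∈ blacks nb nw) (hus : u ∉ Sig σ (tb σ k))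
    (huo : u ∉ (ObAux (percGraph W p) σ (k-1)).1)
    (hwo : w ∉ ⋃ j ∈ Finset.range (k-1), Ow (percGraph W p) σ (j+1)) :
    rk0 σ w = tb σ k - 2 ∧ (percGraph W p).Adj w (sigb σ k) ∧
      (∀ x, (percGraph W p).Reachable w x → rk0 σ w ≤ rk0 σ x) := by
  have ht1 : 1 ≤ (tb σ k) := tb_pos hσ hk1 hk
  have htn : (tb σ k) ≤ (nb + nw) := tb_le hσ hk
  have hr : (rk0 σ w) < (tb σ k) := (mem_Sig_iff hσ).1 hwS
  have hσr : σ (rk0 σ w) = w := sigma_rk0 hσ w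
  have hs_eq : sigb σ k = σ ((tb σ k)-1) := rfl
  have hrne : (rk0 σ w) ≠ (tb σ k) - 1 := fun h =>
    not_black_and_white (sigb_black hσ hk1 hk) (by rw [hs_eq, ← h, hσr]; exact hw)
  have ht2 : 2 ≤ (tb σ k) := by omega
  have hrle : (rk0 σ w) ≤ (tb σ k) - 2 := by omega
  have hσq : σ (rk0 σ u) = u := sigma_rk0 hσ u
  have hqn : (rk0 σ u) < (nb + nw) := rk0_lt hσ u
  have hq : (tb σ k) ≤ (rk0 σ u) := by
    by_contra hlt
    push_neg at hlt
    exact hus ((mem_Sig_iff hσ).2 hlt)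
  have hwtwu : wt W w u ≤ p := hadj.2
  -- all edges across the cut at step (rk0 σ w) have weight > p
  have hcut : ∀ a b, a < (rk0 σ w) → (rk0 σ w) ≤ b → b < (nb + nw) → p < wt W (σ a) (σ b) := by
    intro a b ha hb hbn
    obtain ⟨j₁, hj₁, hmin⟩ := hσ.2.2 (rk0 σ w) (by omega) (by omega)
    have hgt : p < wt W (σ j₁) (σ (rk0 σ w)) := by
      by_contra hle
      push_neg at hle
      have hne : σ j₁ ≠ σ (rk0 σ w) := fun h => (by omega : j₁ ≠ (rk0 σ w)) (hσ.2.1 (Set.mem_Iio.2 (by omega)) (Set.mem_Iio.2 (by omega)) h)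
      have hadj1 : (percGraph W p).Adj (σ j₁) w := hσr ▸ ⟨hne, hle⟩
      have hjb : σ j₁ ∈ blacks nb nw := adj_white_black hp1 hadj1.symm hw
      have hrkj : rk0 σ (σ j₁) = j₁ := rk0_sigma hσ (by omega)
      obtain ⟨j, hj1', hjk', htbj, hsigbj⟩ :=
        blackIndex hσ hk1 hk hjb (by rw [hrkj]; omega)
      exact hwo (discovered hσ hp1 hk hw
        ⟨j, hj1', hjk', by rw [htbj]; omega, by rw [hsigbj]; exact hadj1⟩)
    exact lt_of_lt_of_le hgt (hmin a b ha hb hbn)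
  -- the next Prim vertex `σ ((rk0 σ w)+1)` is a black neighbour of `w`
  obtain ⟨j₂, hj₂, hmin₂⟩ := hσ.2.2 ((rk0 σ w)+1) (by omega) (by omega)
  have hle2 : wt W (σ j₂) (σ ((rk0 σ w)+1)) ≤ p := by
    have h := hmin₂ (rk0 σ w) (rk0 σ u) (by omega) (by omega) (by omega)
    rw [hσr, hσq] at h
    exact le_trans h hwtwu
  have hj₂r : j₂ = (rk0 σ w) := by
    by_contra hne
    exact absurd hle2 (not_le.2 (hcut j₂ ((rk0 σ w)+1) (by omega) (by omega) (by omega)))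
  rw [hj₂r] at hle2
  have hadjnext : (percGraph W p).Adj w (σ ((rk0 σ w)+1)) := by
    refine percGraph_adj.2 ⟨?_, by nth_rewrite 1 [← hσr]; exact hle2⟩
    exact fun h => absurd
      (hσ.2.1 (Set.mem_Iio.2 (by omega)) (Set.mem_Iio.2 (by omega)) (hσr.trans h))
      (by omega : ¬ (rk0 σ w = rk0 σ w + 1))
  have hnextb : σ ((rk0 σ w)+1) ∈ blacks nb nw := adj_white_black hp1 hadjnext hw
  -- leadness
  have hlead : ∀ x, (percGraph W p).Reachable w x → (rk0 σ w) ≤ rk0 σ x := by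
    intro x hx
    rcases Nat.eq_zero_or_pos (rk0 σ w) with hr0 | hr0
    · omega
    · have hstart : w ∉ Sig σ (rk0 σ w) := fun h => absurd ((mem_Sig_iff hσ).1 h) (by omega)
      have hnS : x ∉ Sig σ (rk0 σ w) := by
        obtain ⟨wk⟩ := hx
        refine walk_avoid ?_ wk hstart
        intro a b hab ha hbS
        obtain ⟨c, hc, rfl⟩ := hbS
        obtain ⟨d, hdn, rfl⟩ := exists_rank hσ a
        have hd : (rk0 σ w) ≤ d := by
          by_contra hlt
          push_neg at hlt
          exact ha ⟨d, hlt, rfl⟩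
        refine absurd hab.2 (not_le.2 ?_)
        rw [wt_symm]
        exact hcut c d hc hd hdn
      by_contra hcon
      push_neg at hcon
      exact hnS ((mem_Sig_iff hσ).2 hcon)
  -- rule out `(rk0 σ w) + 1 < (tb σ k) - 1`
  rcases Nat.lt_or_ge ((rk0 σ w)+1) ((tb σ k)-1) with hcase | hcase
  · exfalso
    have hrk1 : rk0 σ (σ ((rk0 σ w)+1)) = (rk0 σ w) + 1 := rk0_sigma hσ (by omega)
    obtain ⟨j, hj1', hjk', htbj, hsigbj⟩ :=
      blackIndex hσ hk1 hk hnextb (by rw [hrk1]; omega)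
    have hwn : w ∈ nbhd (percGraph W p) {sigb σ j} := by
      rw [hsigbj]
      exact mem_nbhd_singleton.2
        ⟨fun h => not_black_and_white (h ▸ hnextb) hw, hadjnext.symm⟩
    exact ObHit hσ hp1 hk hj1' hjk' hwn hadj hub hus huo
  · have hreq : (rk0 σ w) = (tb σ k) - 2 := by omega
    have hnext_eq : (rk0 σ w) + 1 = (tb σ k) - 1 := by omega
    refine ⟨hreq, ?_, hlead⟩
    rw [hs_eq, ← hnext_eq]
    exact hadjnext

end PrimBip


open PrimBip

/-- Lemma `lem: decomp`: listing the members of `𝒪^w_k` in increasing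
Prim rank as `v_{k,1},…,v_{k,O^w_k}` and setting `𝒦_{k,1} = 𝒦^b_k`,
`𝒩_i = N(v_{k,i}) ∩ 𝒦_{k,i}`, `𝒦_{k,i+1} = 𝒦_{k,i} ∖ 𝒩_i`, together with the boundary
set `𝒩_0`, the sets `𝒩_i`, `0 ≤ i ≤ O^w_k`, are pairwise disjoint and their union is
`𝒪^b_k`. -/
theorem statement_11 {nb nw : ℕ} (hnb : 0 < nb) (hnw : 0 < nw)
    (W : Fin nb → Fin nw → ℝ) (σ : ℕ → V nb nw)
    (hW : GoodWeights W) (hσ : IsPrimSeq W σ)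
    (p : ℝ) (hp : p ∈ Set.Icc (0:ℝ) 1)
    (G : SimpleGraph (V nb nw)) (hG : G = percGraph W p)
    (k : ℕ) (hk1 : 1 ≤ k) (hk2 : k ≤ nb)
    (m : ℕ) (hm : m = Owc G σ k)
    -- `v` enumerates `𝒪^w_k` in increasing Prim rank
    (v : ℕ → V nb nw)
    (hv1 : ∀ i, 1 ≤ i → i ≤ m → v i ∈ Ow G σ k)
    (hv2 : Ow G σ k ⊆ v '' Set.Icc 1 m)
    (hv3 : StrictMonoOn (fun i => rk0 σ (v i)) (Set.Icc 1 m))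
    -- the sets `𝒦_{k,i}` and `𝒩_i`
    (KK NN : ℕ → Set (V nb nw))
    (hK1 : KK 1 = Kb G σ k)
    (hNN : ∀ i, 1 ≤ i → i ≤ m → NN i = nbhd G {v i} ∩ KK i)
    (hKK : ∀ i, 1 ≤ i → i ≤ m → KK (i+1) = KK i \ NN i)
    (hN0a : (vat σ (tb σ k - 1) ∈ Jw G σ k ∧ vat σ (tb σ k - 1) ∈ nbhd G {sigb σ k}) →
      NN 0 = nbhd G {vat σ (tb σ k - 1)} ∩ KK (m+1))
    (hN0b : ¬ (vat σ (tb σ k - 1) ∈ Jw G σ k ∧ vat σ (tb σ k - 1) ∈ nbhd G {sigb σ k}) →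
      NN 0 = ∅) :
    (∀ i ≤ m, ∀ j ≤ m, i ≠ j → Disjoint (NN i) (NN j)) ∧
    Ob G σ k = ⋃ i ∈ Finset.range (m+1), NN i := by
  subst hG
  obtain ⟨hp0, hp1⟩ := hp
  -- basic containments for the KK chain
  have KKsub : ∀ i, 1 ≤ i → i ≤ m + 1 → KK i ⊆ Kb (percGraph W p) σ k := by
    intro i
    induction i with
    | zero => intro h; omega
    | succ i ih =>
      intro _ hle
      rcases Nat.eq_zero_or_pos i with rfl | hi
      · rw [hK1]
      · rw [hKK i hi (by omega)]
        exact subset_trans Set.diff_subset (ih hi (by omega))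
  have KKmono : ∀ j, j ≤ m + 1 → ∀ i, 1 ≤ i → i ≤ j → KK j ⊆ KK i := by
    intro j
    induction j with
    | zero => intro _ i h1 h2; omega
    | succ j ih =>
      intro hj i h1 h2
      rcases Nat.lt_or_ge i (j+1) with hlt | hge
      · have hj1 : 1 ≤ j := by omega
        refine subset_trans ?_ (ih (by omega) i h1 (by omega))
        rw [hKK j hj1 (by omega)]
        exact Set.diff_subset
      · have hij : i = j + 1 := by omega
        subst hij
        exact subset_rfl
  -- disjointness
  have hdisj_lt : ∀ i j, 1 ≤ i → i < j → j ≤ m → Disjoint (NN i) (NN j) := by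
    intro i j h1 hij hjm
    rw [Set.disjoint_left]
    intro x hxi hxj
    have hsub : NN j ⊆ KK j := by
      rw [hNN j (by omega) hjm]; exact Set.inter_subset_right
    have h2 : KK j ⊆ KK (i+1) := KKmono j (by omega) (i+1) (by omega) (by omega)
    have h3 : x ∈ KK i \ NN i := by rw [← hKK i h1 (by omega)]; exact h2 (hsub hxj)
    exact h3.2 hxi
  have hdisj0 : ∀ j, 1 ≤ j → j ≤ m → Disjoint (NN 0) (NN j) := by
    intro j h1 hjm
    by_cases hcond : (vat σ (tb σ k - 1) ∈ Jw (percGraph W p) σ k ∧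
        vat σ (tb σ k - 1) ∈ nbhd (percGraph W p) {sigb σ k})
    · rw [Set.disjoint_left]
      intro x hx0 hxj
      rw [hN0a hcond] at hx0
      have h2 : KK (m+1) ⊆ KK (j+1) := KKmono (m+1) le_rfl (j+1) (by omega) (by omega)
      have h3 : x ∈ KK j \ NN j := by rw [← hKK j h1 hjm]; exact h2 hx0.2
      exact h3.2 hxj
    · rw [hN0b hcond]
      exact Set.disjoint_left.2 (fun x hx => absurd hx (Set.notMem_empty x))
  -- membership helper for Ob
  have hObk := Ob_eq (G := percGraph W p) (σ := σ) hk1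
  have hs_black : sigb σ k ∈ blacks nb nw := sigb_black hσ hk1 hk2
  have hs_mem : sigb σ k ∈ Sig σ (tb σ k) := sigb_mem_Sig hσ hk1 le_rfl hk2
  have hOb_in : ∀ (x u' : V nb nw), x ∈ nbhd (percGraph W p) {sigb σ k} →
      (percGraph W p).Adj x u' → u' ∈ Kb (percGraph W p) σ k →
      u' ∈ Ob (percGraph W p) σ k := by
    intro x u' hx hxu hu'
    rw [hObk]
    refine ⟨⟨⟨?_, ⟨x, hx, hxu⟩⟩, ?_⟩, hu'⟩
    · intro hmem
      exact not_black_and_white hu'.1 (nbhd_singleton_black hp1 hs_black hmem)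
    · intro hmem
      rw [Set.mem_singleton_iff] at hmem
      exact (Kb_not_Sig hu') (hmem ▸ hs_mem)
  refine ⟨?_, Set.Subset.antisymm ?_ ?_⟩
  · -- disjointness, general form
    intro i him j hjm hne
    rcases Nat.eq_zero_or_pos i with rfl | hi
    · exact hdisj0 j (by omega) hjm
    rcases Nat.eq_zero_or_pos j with rfl | hj
    · exact (hdisj0 i hi him).symm
    rcases Nat.lt_or_ge i j with h | h
    · exact hdisj_lt i j hi h hjm
    · exact (hdisj_lt j i hj (by omega) him).symm
  · -- Ob ⊆ ⋃ NN
    intro u hu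
    rw [hObk] at hu
    obtain ⟨⟨⟨hun, x, hxnb, hxu⟩, husne⟩, huKb⟩ := hu
    have hw_white : x ∈ whites nb nw := nbhd_singleton_black hp1 hs_black hxnb
    have hub : u ∈ blacks nb nw := huKb.1
    have hus : u ∉ Sig σ (tb σ k) := Kb_not_Sig huKb
    have huo : u ∉ (ObAux (percGraph W p) σ (k-1)).1 := (Kb_spec huKb).2.1
    simp only [Set.mem_iUnion, Finset.mem_range, exists_prop]
    by_cases hex : ∃ i, 1 ≤ i ∧ i ≤ m ∧ u ∈ NN i
    · obtain ⟨i, h1, h2, h3⟩ := hex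
      exact ⟨i, by omega, h3⟩
    · push_neg at hex
      have hKKall : ∀ i, 1 ≤ i → i ≤ m + 1 → u ∈ KK i := by
        intro i
        induction i with
        | zero => intro h; omega
        | succ i ih =>
          intro _ hle
          rcases Nat.eq_zero_or_pos i with rfl | hi
          · rw [hK1]; exact huKb
          · rw [hKK i hi (by omega)]
            exact ⟨ih hi (by omega), hex i hi (by omega)⟩
      by_cases hxKw : x ∈ Kw (percGraph W p) σ k
      · exfalso
        have hxOw : x ∈ Ow (percGraph W p) σ k := ⟨hxnb, hxKw⟩
        obtain ⟨i, hi, hvi⟩ := hv2 hxOw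
        have humem : u ∈ NN i := by
          rw [hNN i hi.1 hi.2]
          refine ⟨mem_nbhd_singleton.2 ⟨?_, by rw [hvi]; exact hxu⟩, hKKall i hi.1 (by have := hi.2; omega)⟩
          intro h
          exact not_black_and_white (h ▸ hub) (by rw [hvi]; exact hw_white)
        exact hex i hi.1 hi.2 humem
      · have hx' : x ∈ SigW σ (tb σ k) ∪
            ⋃ j ∈ Finset.range (k-1), Ow (percGraph W p) σ (j+1) := by
          by_contra hcon
          exact hxKw (by rw [Kw_eq hσ k hk1 hk2]; exact ⟨hw_white, hcon⟩)
        have hxnotO : x ∉ ⋃ j ∈ Finset.range (k-1), Ow (percGraph W p) σ (j+1) := by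
          intro hxO
          simp only [Set.mem_iUnion, Finset.mem_range, exists_prop] at hxO
          obtain ⟨j, hjlt, hOwj⟩ := hxO
          exact ObHit hσ hp1 hk2 (by omega) (by omega) hOwj.1 hxu hub hus huo
        rcases hx' with hxS | hxO
        · obtain ⟨hreq, hadjs, hlead⟩ :=
            keyLemma hσ hp1 hk1 hk2 hw_white hxS.1 hxu hub hus huo hxnotO
          have hx_eq : x = vat σ (tb σ k - 1) := by
            have h1 : σ (tb σ k - 2) = x := by rw [← hreq]; exact sigma_rk0 hσ x
            have h2 : tb σ k - 1 - 1 = tb σ k - 2 := by omega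
            show x = σ (tb σ k - 1 - 1)
            rw [h2]
            exact h1.symm
          have hcond : vat σ (tb σ k - 1) ∈ Jw (percGraph W p) σ k ∧
              vat σ (tb σ k - 1) ∈ nbhd (percGraph W p) {sigb σ k} := by
            rw [← hx_eq]
            refine ⟨⟨hxS, hlead⟩, mem_nbhd_singleton.2 ⟨?_, hadjs.symm⟩⟩
            intro h
            exact not_black_and_white (h ▸ hs_black) hw_white
          refine ⟨0, by omega, ?_⟩
          rw [hN0a hcond, ← hx_eq]
          refine ⟨mem_nbhd_singleton.2 ⟨?_, hxu⟩, hKKall (m+1) (by omega) le_rfl⟩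
          intro h
          exact not_black_and_white (h ▸ hub) hw_white
        · exact absurd hxO hxnotO
  · -- ⋃ NN ⊆ Ob
    intro u hu
    simp only [Set.mem_iUnion, Finset.mem_range, exists_prop] at hu
    obtain ⟨i, him, hui⟩ := hu
    rcases Nat.eq_zero_or_pos i with rfl | hi
    · by_cases hcond : (vat σ (tb σ k - 1) ∈ Jw (percGraph W p) σ k ∧
          vat σ (tb σ k - 1) ∈ nbhd (percGraph W p) {sigb σ k})
      · rw [hN0a hcond] at hui
        exact hOb_in _ u hcond.2 (mem_nbhd_singleton.1 hui.1).2
          (KKsub (m+1) (by omega) le_rfl hui.2)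
      · rw [hN0b hcond] at hui
        exact absurd hui (Set.notMem_empty u)
    · rw [hNN i hi (by omega)] at hui
      have hviOw : v i ∈ Ow (percGraph W p) σ k := hv1 i hi (by omega)
      exact hOb_in (v i) u hviOw.1 (mem_nbhd_singleton.1 hui.1).2
        (KKsub i hi (by omega) hui.2)
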